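/- Greedy guarantee from bounded curvature and submodularity ratio: Let f be a nonnegative monotone nondecreasing set function on subsets of {1,...,N} with curvature ξ ∈ (0,1] and submodularity ratio γ ∈ (0,1]. Then the greedy algorithm selecting κ elements, each maximizing the marginal gain, returns a set S_G with f(S_G) ≥ (1/ξ)(1 − e^{−ξγ}) · max_{|S|≤κ} f(S). -/

import Mathlib

lemma bian_aux_key (ξ t t' : ℝ) (hξ0 : 0 ≤ ξ) (hξ1 : ξ ≤ 1) (ht0 : 0 ≤ t) (ht1 : t ≤ 1)
    (htt' : t ≤ t') (hξt' : ξ * t' ≤ 1) (hq : t^2 ≤ (1 - t) * (t' - t)) :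
    ∀ n : ℕ, 1 - ξ ≤ (1 - ξ*t')^n → (1-ξ)*t + (1-t)*(1-ξ*t')^n ≤ (1-ξ*t)^(n+1) := by
  have ha'0 : 0 ≤ 1 - ξ*t' := by linarith
  have hξt : ξ*t ≤ ξ*t' := mul_le_mul_of_nonneg_left htt' hξ0
  have ha0 : 0 ≤ 1 - ξ*t := by linarith
  have ha'1 : 1 - ξ*t' ≤ 1 := by nlinarith [mul_nonneg hξ0 (le_trans ht0 htt')]
  intro n
  induction n with
  | zero =>
    intro _
    have he : (1-ξ*t)^(0+1) = 1-ξ*t := by ring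
    rw [pow_zero, he]
    nlinarith
  | succ n ih =>
    intro hside
    have hside' : 1 - ξ ≤ (1 - ξ*t')^n :=
      le_trans hside (pow_le_pow_of_le_one ha'0 ha'1 (Nat.le_succ n))
    have IH := ih hside'
    have hmul : ((1-ξ)*t + (1-t)*(1-ξ*t')^n) * (1-ξ*t) ≤ (1-ξ*t)^(n+1) * (1-ξ*t) :=
      mul_le_mul_of_nonneg_right IH ha0
    have hpow : (1-ξ*t)^(n+1+1) = (1-ξ*t)^(n+1) * (1-ξ*t) := pow_succ _ _
    have h6 : (1-t)*(t'-t)*(1-ξ) ≤ (1-t)*(t'-t)*(1-ξ*t')^n :=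
      mul_le_mul_of_nonneg_left hside' (mul_nonneg (by linarith) (by linarith))
    have h7 : t^2*(1-ξ) ≤ (1-t)*(t'-t)*(1-ξ*t')^n := by
      nlinarith [mul_le_mul_of_nonneg_right hq (by linarith : (0:ℝ) ≤ 1-ξ)]
    have h8 : 0 ≤ ξ*((1-t)*(1-ξ*t')^n*(t'-t) - t^2*(1-ξ)) :=
      mul_nonneg hξ0 (by nlinarith [h7])
    have hid : (1-ξ)*t + (1-t)*(1-ξ*t')^(n+1) =
        ((1-ξ)*t + (1-t)*(1-ξ*t')^n)*(1-ξ*t) - ξ*((1-t)*(1-ξ*t')^n*(t'-t) - t^2*(1-ξ)) := by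
      rw [pow_succ]; ring
    rw [hid]
    linarith [hmul, h8, hpow.symm.le, hpow.le]

set_option maxHeartbeats 2000000 in
lemma bian_greedy_rec (ξ γ : ℝ) (hξ0 : 0 < ξ) (hξ1 : ξ ≤ 1) (hγ0 : 0 < γ) (hγ1 : γ ≤ 1)
    (κ : ℕ) (Φ B : ℕ → ℝ) (D : ℕ → ℕ)
    (hΦpos : ∀ i, i ≤ κ → 0 ≤ Φ i) (hD : ∀ i, i ≤ κ → 1 ≤ D i)
    (hstep : ∀ i, i < κ → ∃ δ : ℝ, 0 ≤ δ ∧ γ * Φ i ≤ (D i : ℝ) * δ ∧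
      ((Φ (i+1) = Φ i - δ ∧ B (i+1) = B i + δ ∧ D (i+1) + 1 = D i) ∨
       (Φ (i+1) = Φ i - ξ*δ ∧ B (i+1) = B i ∧ D (i+1) = D i))) :
    Φ κ + (1-ξ)*B κ ≤ (1-ξ)*B 0 + Φ 0 * max (1-ξ) ((1 - ξ*γ/(D 0 : ℝ))^κ) := by
  have hξγ1 : ξ*γ ≤ 1 := by nlinarith
  have key : ∀ n, n ≤ κ → Φ κ + (1-ξ)*B κ ≤
      (1-ξ)*B (κ-n) + Φ (κ-n) * max (1-ξ) ((1 - ξ*γ/(D (κ-n) : ℝ))^n) := by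
    intro n
    induction n with
    | zero =>
      intro _
      simp only [Nat.sub_zero, pow_zero]
      rw [max_eq_right (by linarith : 1-ξ ≤ (1:ℝ)), mul_one]
      linarith
    | succ n ih =>
      intro hn1
      set i := κ - (n+1) with hidef
      have hi : i < κ := by omega
      have hik : κ - n = i + 1 := by omega
      have IH := ih (by omega)
      rw [hik] at IH
      refine IH.trans ?_
      obtain ⟨δ, hδ0, hcons, hcase⟩ := hstep i hi
      have hΦ : 0 ≤ Φ i := hΦpos i hi.le
      have hΦ1 : 0 ≤ Φ (i+1) := hΦpos (i+1) hi
      have hd1 : 1 ≤ D i := hD i hi.le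
      have hd1R : (1:ℝ) ≤ (D i : ℝ) := by exact_mod_cast hd1
      have hd0R : (0:ℝ) < (D i : ℝ) := by linarith
      have hδt : γ/(D i : ℝ) * Φ i ≤ δ := by
        rw [div_mul_eq_mul_div, div_le_iff₀ hd0R]
        linarith [hcons]
      have hbase0 : 0 ≤ 1 - ξ*γ/(D i : ℝ) := by
        have h1 : ξ*γ/(D i : ℝ) ≤ ξ*γ := div_le_self (by positivity) hd1R
        linarith
      rcases hcase with ⟨hΦe, hBe, hDe⟩ | ⟨hΦe, hBe, hDe⟩
      · -- step inside S (J^c)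
        have hd2' : 1 ≤ D (i+1) := hD (i+1) hi
        have hcast : ((D (i+1) : ℝ)) = (D i : ℝ) - 1 := by
          have h2 : ((D (i+1) : ℝ)) + 1 = (D i : ℝ) := by exact_mod_cast congrArg (Nat.cast : ℕ → ℝ) hDe
          linarith
        have hδΦ : δ ≤ Φ i := by rw [hΦe] at hΦ1; linarith
        set e := ((D (i+1)) : ℝ) with hedef
        have he1 : (1:ℝ) ≤ e := by rw [hedef]; exact_mod_cast hd2'
        have he0 : (0:ℝ) < e := by linarith
        have hde : (D i : ℝ) = e + 1 := by linarith [hcast]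
        rcases le_total ((1 - ξ*γ/e)^n) (1-ξ) with hX | hX
        · rw [max_eq_left hX, hΦe, hBe]
          have hMi : Φ i * (1-ξ) ≤ Φ i * max (1-ξ) ((1-ξ*γ/(D i : ℝ))^(n+1)) :=
            mul_le_mul_of_nonneg_left (le_max_left _ _) hΦ
          linarith [hMi]
        · rw [max_eq_right hX, hΦe, hBe]
          have hq : (γ/(e+1))^2 ≤ (1 - γ/(e+1)) * (γ/e - γ/(e+1)) := by
            have h7 : γ/e - γ/(e+1) = γ/(e*(e+1)) := by
              field_simp
              ring
            have h8 : 1 - γ/(e+1) = (e+1-γ)/(e+1) := by field_simp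
            rw [h7, h8, div_pow, div_mul_div_comm, div_le_div_iff₀ (by positivity) (by positivity)]
            nlinarith [mul_nonneg (mul_nonneg hγ0.le (sub_nonneg.2 hγ1))
              (pow_nonneg (by linarith : (0:ℝ) ≤ e+1) 3)]
          have hKEY := bian_aux_key ξ (γ/(e+1)) (γ/e) hξ0.le hξ1 (by positivity)
            (by rw [div_le_one (by positivity)]; linarith)
            (by rw [div_le_div_iff₀ (by positivity) he0]; nlinarith)
            (by rw [← mul_div_assoc]; exact le_trans (div_le_self (by positivity) he1) hξγ1)
            hq n (by have h9 := hX; rw [mul_div_assoc] at h9; exact h9)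
          rw [← mul_div_assoc (ξ) γ, ← mul_div_assoc (ξ) γ] at hKEY
          have hXnn : 0 ≤ (1 - ξ*γ/e)^n := le_trans (by linarith) hX
          have h1 : (γ/(e+1))*(Φ i)*((1 - ξ*γ/e)^n - (1-ξ)) ≤ δ*((1 - ξ*γ/e)^n - (1-ξ)) := by
            apply mul_le_mul_of_nonneg_right _ (by linarith)
            rw [hde] at hδt; exact hδt
          have h2 : Φ i * ((1-ξ)*(γ/(e+1)) + (1-γ/(e+1))*(1 - ξ*γ/e)^n)
              ≤ Φ i * ((1 - ξ*γ/(e+1))^(n+1)) :=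
            mul_le_mul_of_nonneg_left hKEY hΦ
          have h3 : Φ i * ((1 - ξ*γ/(e+1))^(n+1)) ≤
              Φ i * max (1-ξ) ((1-ξ*γ/(e+1))^(n+1)) :=
            mul_le_mul_of_nonneg_left (le_max_right _ _) hΦ
          rw [hde]
          linarith [h1, h2, h3]
      · -- step outside S (J)
        rw [hDe, hΦe, hBe]
        rcases le_total ((1 - ξ*γ/(D i : ℝ))^n) (1-ξ) with hX | hX
        · rw [max_eq_left hX]
          have h1 : (Φ i - ξ*δ)*(1-ξ) ≤ Φ i*(1-ξ) :=
            mul_le_mul_of_nonneg_right (by nlinarith [mul_nonneg hξ0.le hδ0]) (by linarith)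
          have h2 : Φ i*(1-ξ) ≤ Φ i * max (1-ξ) ((1-ξ*γ/(D i : ℝ))^(n+1)) :=
            mul_le_mul_of_nonneg_left (le_max_left _ _) hΦ
          linarith
        · rw [max_eq_right hX]
          have hXnn : 0 ≤ (1 - ξ*γ/(D i : ℝ))^n := le_trans (by linarith) hX
          have h1 : ξ*(γ/(D i : ℝ)*Φ i) ≤ ξ*δ := mul_le_mul_of_nonneg_left hδt hξ0.le
          have h2 : (Φ i - ξ*δ)*((1 - ξ*γ/(D i : ℝ))^n) ≤
              (Φ i - ξ*(γ/(D i : ℝ)*Φ i))*((1 - ξ*γ/(D i : ℝ))^n) :=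
            mul_le_mul_of_nonneg_right (by linarith) hXnn
          have hpow : (1 - ξ*γ/(D i : ℝ))^(n+1) = (1 - ξ*γ/(D i : ℝ))^n * (1 - ξ*γ/(D i : ℝ)) :=
            pow_succ _ _
          have h3 : Φ i * ((1 - ξ*γ/(D i : ℝ))^(n+1)) ≤
              Φ i * max (1-ξ) ((1-ξ*γ/(D i : ℝ))^(n+1)) :=
            mul_le_mul_of_nonneg_left (le_max_right _ _) hΦ
          calc (1-ξ)*B i + (Φ i - ξ*δ)*((1 - ξ*γ/(D i : ℝ))^n)
              ≤ (1-ξ)*B i + (Φ i - ξ*(γ/(D i : ℝ)*Φ i))*((1 - ξ*γ/(D i : ℝ))^n) := by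
                linarith [h2]
            _ = (1-ξ)*B i + Φ i * ((1 - ξ*γ/(D i : ℝ))^(n+1)) := by rw [hpow]; ring
            _ ≤ (1-ξ)*B i + Φ i * max (1-ξ) ((1-ξ*γ/(D i : ℝ))^(n+1)) := by linarith [h3]
  have h := key κ le_rfl
  simpa using h



/-- Greedy guarantee from bounded curvature and submodularity ratio (Bian et al. 2017):
for a nonnegative monotone set function `f` with curvature `ξ ∈ (0,1]` and
submodularity ratio `γ ∈ (0,1]`, the greedy algorithm choosing `κ` elements, each
maximizing the marginal gain, returns `g κ` with
`f(g κ) ≥ (1/ξ)(1 − e^{−ξγ}) · max_{|S| ≤ κ} f(S)`. -/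
theorem greedy_guarantee_curvature_submodularity_ratio {N : ℕ}
    (f : Finset (Fin N) → ℝ)
    (hf0 : ∀ S, 0 ≤ f S)
    (hmono : ∀ S R : Finset (Fin N), S ⊆ R → f S ≤ f R)
    (ξ γ : ℝ) (hξ0 : 0 < ξ) (hξ1 : ξ ≤ 1) (hγ0 : 0 < γ) (hγ1 : γ ≤ 1)
    (hcurv : ∀ S R : Finset (Fin N), S ⊆ R → ∀ k, k ∉ R →
      (1 - ξ) * (f (insert k S) - f S) ≤ f (insert k R) - f R)
    (hratio : ∀ S R : Finset (Fin N),
      γ * (f (S ∪ R) - f S) ≤ ∑ k ∈ R \ S, (f (insert k S) - f S))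
    (κ : ℕ) (g : ℕ → Finset (Fin N)) (hg0 : g 0 = ∅)
    (hstep : ∀ t, t < κ → ∃ k, k ∉ g t ∧ g (t+1) = insert k (g t) ∧
      ∀ k', k' ∉ g t → f (insert k' (g t)) ≤ f (insert k (g t))) :
    ∀ S : Finset (Fin N), S.card ≤ κ →
      (1 / ξ) * (1 - Real.exp (-(ξ * γ))) * f S ≤ f (g κ) := by
  intro S hS
  have hexp1 : Real.exp (-(ξ*γ)) ≤ 1 := by
    have h := Real.exp_le_exp.mpr (neg_nonpos.mpr (mul_nonneg hξ0.le hγ0.le))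
    rwa [Real.exp_zero] at h
  have hcoef : 1/ξ * (1 - Real.exp (-(ξ*γ))) ≤ 1 := by
    have h1 : 1 - Real.exp (-(ξ*γ)) ≤ ξ*γ := by linarith [Real.add_one_le_exp (-(ξ*γ))]
    have h2 : 1/ξ * (1 - Real.exp (-(ξ*γ))) ≤ 1/ξ * (ξ*γ) :=
      mul_le_mul_of_nonneg_left h1 (by positivity)
    have h3 : 1/ξ * (ξ*γ) = γ := by field_simp
    linarith
  have hdone : f S ≤ f (g κ) → 1/ξ * (1 - Real.exp (-(ξ * γ))) * f S ≤ f (g κ) := by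
    intro h
    calc 1/ξ * (1 - Real.exp (-(ξ*γ))) * f S ≤ 1 * f S :=
          mul_le_mul_of_nonneg_right hcoef (hf0 S)
      _ = f S := one_mul _
      _ ≤ f (g κ) := h
  by_cases hSemp : S = ∅
  · subst hSemp
    exact hdone (hmono _ _ (Finset.empty_subset _))
  obtain ⟨x0, hx0⟩ : S.Nonempty := Finset.nonempty_iff_ne_empty.mpr hSemp
  have hex : ∀ t : ℕ, ∃ kk : Fin N, t < κ → kk ∉ g t ∧ g (t+1) = insert kk (g t) ∧
      ∀ k', k' ∉ g t → f (insert k' (g t)) ≤ f (insert kk (g t)) := by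
    intro t
    by_cases h : t < κ
    · obtain ⟨kk, h1, h2, h3⟩ := hstep t h
      exact ⟨kk, fun _ => ⟨h1, h2, h3⟩⟩
    · exact ⟨x0, fun h' => absurd h' h⟩
  choose k hk using hex
  have hins : ∀ t, t < κ → g (t+1) = insert (k t) (g t) := fun t ht => (hk t ht).2.1
  have hnotin : ∀ t, t < κ → k t ∉ g t := fun t ht => (hk t ht).1
  have hsub1 : ∀ t, t < κ → g t ⊆ g (t+1) := by
    intro t ht; rw [hins t ht]; exact Finset.subset_insert _ _
  have hδnn : ∀ t, t < κ → 0 ≤ f (g (t+1)) - f (g t) := by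
    intro t ht; have := hmono _ _ (hsub1 t ht); linarith
  have hsubκ : ∀ i, i ≤ κ → g i ⊆ g κ := by
    have H : ∀ n i, i + n ≤ κ → g i ⊆ g (i + n) := by
      intro n
      induction n with
      | zero => intro i _; exact Finset.Subset.refl _
      | succ n ih =>
        intro i h
        have h1 := ih i (by omega)
        have h2 := hsub1 (i+n) (by omega)
        have h3 : i + (n+1) = (i+n)+1 := by omega
        rw [h3]
        exact h1.trans h2
    intro i hi
    have := H (κ - i) i (by omega)
    rwa [show i + (κ - i) = κ by omega] at this
  set A : ℕ → ℝ := fun i => ∑ j ∈ Finset.range i,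
      (if k j ∈ S then (0:ℝ) else f (g (j+1)) - f (g j)) with hAdef
  set Bs : ℕ → ℝ := fun i => ∑ j ∈ Finset.range i,
      (if k j ∈ S then f (g (j+1)) - f (g j) else (0:ℝ)) with hBdef
  have hA0 : A 0 = 0 := by simp [hAdef]
  have hB0 : Bs 0 = 0 := by simp [hBdef]
  have hAstep : ∀ i, A (i+1) = A i + (if k i ∈ S then (0:ℝ) else f (g (i+1)) - f (g i)) := by
    intro i; simp only [hAdef]; exact Finset.sum_range_succ _ _
  have hBstep : ∀ i, Bs (i+1) = Bs i + (if k i ∈ S then f (g (i+1)) - f (g i) else (0:ℝ)) := by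
    intro i; simp only [hBdef]; exact Finset.sum_range_succ _ _
  have hAnn : ∀ i, i ≤ κ → 0 ≤ A i := by
    intro i hi
    simp only [hAdef]
    apply Finset.sum_nonneg
    intro j hj
    have hj' : j < κ := lt_of_lt_of_le (Finset.mem_range.mp hj) hi
    by_cases h : k j ∈ S
    · simp [h]
    · simp only [if_neg h]; exact hδnn j hj'
  have hchain : ∀ i, i ≤ κ → f S + (1-ξ)*A i ≤ f (S ∪ g i) := by
    intro i
    induction i with
    | zero => intro _; rw [hA0, hg0]; simp
    | succ i ih =>
      intro hi1
      have hi : i < κ := hi1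
      have IH := ih hi.le
      rw [hAstep i]
      by_cases hkS : k i ∈ S
      · rw [if_pos hkS, add_zero]
        have he : S ∪ g (i+1) = S ∪ g i := by
          rw [hins i hi, Finset.union_insert,
            Finset.insert_eq_self.mpr (Finset.mem_union_left _ hkS)]
        rw [he]
        exact IH
      · rw [if_neg hkS]
        have hknot : k i ∉ S ∪ g i := by
          rw [Finset.mem_union]; push_neg; exact ⟨hkS, hnotin i hi⟩
        have hcur := hcurv (g i) (S ∪ g i) Finset.subset_union_right (k i) hknot
        have hgi1 : insert (k i) (g i) = g (i+1) := (hins i hi).symm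
        rw [hgi1] at hcur
        have huni : insert (k i) (S ∪ g i) = S ∪ g (i+1) := by
          rw [hins i hi, Finset.union_insert]
        rw [huni] at hcur
        nlinarith [IH, hcur]
  have hcons : ∀ i, i < κ → γ * (f S + (1-ξ)*A i - f (g i)) ≤
      ((S \ g i).card : ℝ) * (f (g (i+1)) - f (g i)) := by
    intro i hi
    have h1 := hratio (g i) S
    rw [Finset.union_comm] at h1
    have h2 : ∀ k' ∈ S \ g i, f (insert k' (g i)) - f (g i) ≤ f (g (i+1)) - f (g i) := by
      intro k' hk'
      have hk'' : k' ∉ g i := (Finset.mem_sdiff.mp hk').2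
      have h5 := (hk i hi).2.2 k' hk''
      rw [← hins i hi] at h5
      linarith
    have h3 := Finset.sum_le_card_nsmul (S \ g i) _ _ h2
    rw [nsmul_eq_mul] at h3
    have h4 : γ * (f S + (1-ξ)*A i - f (g i)) ≤ γ * (f (S ∪ g i) - f (g i)) := by
      apply mul_le_mul_of_nonneg_left _ hγ0.le
      linarith [hchain i hi.le]
    calc γ * (f S + (1-ξ)*A i - f (g i)) ≤ γ * (f (S ∪ g i) - f (g i)) := h4
      _ ≤ ∑ k' ∈ S \ g i, (f (insert k' (g i)) - f (g i)) := h1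
      _ ≤ ((S \ g i).card : ℝ) * (f (g (i+1)) - f (g i)) := h3
  by_cases hgood : ∀ i, i ≤ κ → 0 ≤ f S + (1-ξ)*A i - f (g i) ∧ ¬ S ⊆ g i
  · have hΦpos : ∀ i, i ≤ κ → 0 ≤ f S + (1-ξ)*A i - f (g i) := fun i hi => (hgood i hi).1
    have hD : ∀ i, i ≤ κ → 1 ≤ (S \ g i).card := by
      intro i hi
      have h6 := (hgood i hi).2
      have hne : (S \ g i).Nonempty := by rwa [Finset.sdiff_nonempty]
      exact Finset.card_pos.mpr hne
    have hstepabs : ∀ i, i < κ → ∃ δ : ℝ, 0 ≤ δ ∧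
        γ * (f S + (1-ξ)*A i - f (g i)) ≤ (((S \ g i).card : ℕ) : ℝ) * δ ∧
        ((f S + (1-ξ)*A (i+1) - f (g (i+1)) = f S + (1-ξ)*A i - f (g i) - δ ∧
          Bs (i+1) = Bs i + δ ∧ (S \ g (i+1)).card + 1 = (S \ g i).card) ∨
         (f S + (1-ξ)*A (i+1) - f (g (i+1)) = f S + (1-ξ)*A i - f (g i) - ξ*δ ∧
          Bs (i+1) = Bs i ∧ (S \ g (i+1)).card = (S \ g i).card)) := by
      intro i hi
      refine ⟨f (g (i+1)) - f (g i), hδnn i hi, hcons i hi, ?_⟩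
      by_cases hkS : k i ∈ S
      · left
        refine ⟨?_, ?_, ?_⟩
        · rw [hAstep i, if_pos hkS, add_zero]; ring
        · rw [hBstep i, if_pos hkS]
        · rw [hins i hi, Finset.sdiff_insert]
          exact Finset.card_erase_add_one (Finset.mem_sdiff.mpr ⟨hkS, hnotin i hi⟩)
      · right
        refine ⟨?_, ?_, ?_⟩
        · rw [hAstep i, if_neg hkS]; ring
        · rw [hBstep i, if_neg hkS, add_zero]
        · have he : S \ g (i+1) = S \ g i := by
            rw [hins i hi]
            ext a
            simp only [Finset.mem_sdiff, Finset.mem_insert, not_or]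
            constructor
            · rintro ⟨h1, _, h3⟩; exact ⟨h1, h3⟩
            · rintro ⟨h1, h3⟩; exact ⟨h1, fun he' => hkS (he' ▸ h1), h3⟩
          rw [he]
    have habs := bian_greedy_rec ξ γ hξ0 hξ1 hγ0 hγ1 κ
      (fun i => f S + (1-ξ)*A i - f (g i)) Bs (fun i => (S \ g i).card)
      hΦpos hD hstepabs
    set E := Real.exp (-(ξ*γ)) with hEdef
    have hE1ξ : 1 - ξ ≤ E := by
      have h1 := Real.add_one_le_exp (-(ξ*γ))
      have h2 : ξ*γ ≤ ξ := by nlinarith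
      simp only [hEdef]; linarith
    have hscard : 1 ≤ S.card := Finset.card_pos.mpr ⟨x0, hx0⟩
    have hscR : (1:ℝ) ≤ (S.card : ℝ) := by exact_mod_cast hscard
    have hsκR : (S.card : ℝ) ≤ (κ : ℝ) := by exact_mod_cast hS
    have hM0 : max (1-ξ) ((1 - ξ*γ/(((S \ g 0).card : ℕ) : ℝ))^κ) ≤ E := by
      rw [hg0, Finset.sdiff_empty]
      apply max_le hE1ξ
      have hb0 : 0 ≤ 1 - ξ*γ/(S.card : ℝ) := by
        have h1 : ξ*γ/(S.card : ℝ) ≤ ξ*γ := div_le_self (by positivity) hscR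
        have h2 : ξ*γ ≤ 1 := by nlinarith
        linarith
      have hb1 : 1 - ξ*γ/(S.card : ℝ) ≤ Real.exp (-(ξ*γ/(S.card : ℝ))) := by
        linarith [Real.add_one_le_exp (-(ξ*γ/(S.card : ℝ)))]
      calc (1 - ξ*γ/(S.card : ℝ))^κ ≤ (Real.exp (-(ξ*γ/(S.card : ℝ))))^κ :=
            pow_le_pow_left₀ hb0 hb1 κ
        _ = Real.exp ((κ:ℝ) * (-(ξ*γ/(S.card : ℝ)))) := (Real.exp_nat_mul _ κ).symm
        _ ≤ E := by
            rw [hEdef, Real.exp_le_exp]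
            have h5 : (S.card:ℝ) * (ξ*γ/(S.card:ℝ)) ≤ (κ:ℝ) * (ξ*γ/(S.card:ℝ)) :=
              mul_le_mul_of_nonneg_right hsκR (by positivity)
            have h6 : (S.card:ℝ) * (ξ*γ/(S.card:ℝ)) = ξ*γ := by field_simp
            nlinarith [h5, h6]
    have hΦ0nn : 0 ≤ f S + (1-ξ)*A 0 - f (g 0) := hΦpos 0 (Nat.zero_le _)
    have htele : A κ + Bs κ = f (g κ) - f (g 0) := by
      have h1 : ∀ j, (if k j ∈ S then (0:ℝ) else f (g (j+1)) - f (g j)) +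
          (if k j ∈ S then f (g (j+1)) - f (g j) else (0:ℝ)) = f (g (j+1)) - f (g j) := by
        intro j; by_cases h : k j ∈ S <;> simp [h]
      simp only [hAdef, hBdef]
      rw [← Finset.sum_add_distrib, Finset.sum_congr rfl (fun j _ => h1 j)]
      exact Finset.sum_range_sub (fun j => f (g j)) κ
    have h2 : (f S + (1-ξ)*A 0 - f (g 0)) * max (1-ξ) ((1 - ξ*γ/(((S \ g 0).card : ℕ) : ℝ))^κ)
        ≤ (f S + (1-ξ)*A 0 - f (g 0)) * E := mul_le_mul_of_nonneg_left hM0 hΦ0nn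
    have hΦ0e : (f S + (1-ξ)*A 0 - f (g 0)) * E = (f S - f (g 0)) * E := by rw [hA0]; ring
    have hfin : f S + (1-ξ)*(A κ) - f (g κ) + (1-ξ)*Bs κ ≤ (f S - f (g 0)) * E := by
      rw [hB0] at habs
      linarith only [habs, h2, hΦ0e.le, hΦ0e.ge]
    have hfnil : 0 ≤ f (g 0) := hf0 _
    have hkey2 : (1 - E) * f S ≤ ξ * f (g κ) := by
      have h7 : 0 ≤ (E - (1-ξ)) * f (g 0) := mul_nonneg (by linarith) hfnil
      have h8 : (1-ξ)*(A κ + Bs κ) = (1-ξ)*(f (g κ) - f (g 0)) := by rw [htele]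
      linarith only [hfin, h8, h7]
    have h9 : 1/ξ*(1-E)*f S = (1-E)*f S/ξ := by ring
    rw [h9, div_le_iff₀ hξ0]
    linarith only [hkey2]
  · push_neg at hgood
    obtain ⟨i, hi, himp⟩ := hgood
    apply hdone
    by_cases hΦ : 0 ≤ f S + (1-ξ)*A i - f (g i)
    · have hsubS := himp hΦ
      calc f S ≤ f (g i) := hmono _ _ hsubS
        _ ≤ f (g κ) := hmono _ _ (hsubκ i hi)
    · push_neg at hΦ
      have hAi := hAnn i hi
      have h10 : f S ≤ f (g i) := by nlinarith [mul_nonneg (sub_nonneg.mpr hξ1) hAi]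
      exact h10.trans (hmono _ _ (hsubκ i hi))
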